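/- Pessimism of lower value iteration: suppose for all (s,a,h), |(p̂(·|s,a,h) − p(·|s,a,h))ᵀ V*_{h+1}| ≤ φ(s,a,h), and define recursively V̲_{H+1} = 0 and V̲_h(s) = max{ r(s,π(s,h),h) + p̂(·|s,π(s,h),h)ᵀ V̲_{h+1} − φ(s,π(s,h),h), 0 } for an arbitrary policy π. If additionally V̲_{h+1}(s) ≤ V*_{h+1}(s) for all s, then V̲_h(s) ≤ V*_h(s) for all s. -/
import Mathlib


/-- Optimal value with `n` remaining steps at step `h`:
`V*` via backward recursion `V*_h(s) = max_a [r(s,a,h) + p(·|s,a,h)ᵀ V*_{h+1}]`. -/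
noncomputable def optVal {S A : Type*} [Fintype S]
    (p : S → A → ℕ → S → ℝ) (r : S → A → ℕ → ℝ) :
    ℕ → ℕ → S → ℝ
  | 0, _, _ => 0
  | n + 1, h, s =>
      ⨆ a : A, (r s a h + ∑ s' : S, p s a h s' * optVal p r n (h + 1) s')

lemma optVal_nonneg {S A : Type*} [Fintype S] [Fintype A] [Nonempty A]
    (p : S → A → ℕ → S → ℝ) (r : S → A → ℕ → ℝ)
    (hp0 : ∀ s a h s', 0 ≤ p s a h s')
    (hr : ∀ s a h, r s a h ∈ Set.Icc (0:ℝ) 1) :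
    ∀ n h s, 0 ≤ optVal p r n h s := by
  intro n
  induction n with
  | zero => intro h s; simp [optVal]
  | succ n ih =>
    intro h s
    have hA : ∃ a : A, True := ⟨Classical.arbitrary A, trivial⟩
    obtain ⟨a, -⟩ := hA
    have key : (0:ℝ) ≤ r s a h + ∑ s' : S, p s a h s' * optVal p r n (h + 1) s' := by
      have := (hr s a h).1
      have hs : 0 ≤ ∑ s' : S, p s a h s' * optVal p r n (h + 1) s' :=
        Finset.sum_nonneg fun s' _ => mul_nonneg (hp0 s a h s') (ih (h+1) s')
      linarith
    calc (0:ℝ) ≤ _ := key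
      _ ≤ optVal p r (n+1) h s := by
        apply le_ciSup (f := fun a : A => r s a h + ∑ s' : S, p s a h s' * optVal p r n (h + 1) s')
        exact (Set.finite_range _).bddAbove

/-- Pessimism of lower value iteration (one step): if
`|(p̂(·|s,a,h) − p(·|s,a,h))ᵀ V*_{h+1}| ≤ φ(s,a,h)` for all `(s,a)` and the
pessimistic value `V̲_{h+1} = W` satisfies `W ≤ V*_{h+1}` pointwise, then
`V̲_h(s) = max{r(s,π(s,h),h) + p̂(·|s,π(s,h),h)ᵀ W − φ(s,π(s,h),h), 0} ≤ V*_h(s)`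
for all `s`. -/
theorem lower_value_iteration_pessimism {S A : Type*} [Fintype S] [Fintype A]
    [Nonempty A]
    (H : ℕ) (p phat : S → A → ℕ → S → ℝ) (r : S → A → ℕ → ℝ)
    (φ : S → A → ℕ → ℝ) (π : S → ℕ → A)
    (hp0 : ∀ s a h s', 0 ≤ p s a h s')
    (hp1 : ∀ s a h, ∑ s' : S, p s a h s' = 1)
    (hphat0 : ∀ s a h s', 0 ≤ phat s a h s')
    (hphat1 : ∀ s a h, ∑ s' : S, phat s a h s' = 1)
    (hr : ∀ s a h, r s a h ∈ Set.Icc (0:ℝ) 1)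
    (hφ : ∀ s a h, 0 ≤ φ s a h)
    (h : ℕ) (hh : h < H)
    (hconc : ∀ s a,
      |∑ s' : S, (phat s a h s' - p s a h s') * optVal p r (H - (h + 1)) (h + 1) s'| ≤
        φ s a h)
    (W : S → ℝ)
    (hW : ∀ s, W s ≤ optVal p r (H - (h + 1)) (h + 1) s) :
    ∀ s : S,
      max (r s (π s h) h + (∑ s' : S, phat s (π s h) h s' * W s') - φ s (π s h) h) 0 ≤
        optVal p r (H - h) h s := by
  intro s
  obtain ⟨m, hm⟩ : ∃ m, H - h = m + 1 := ⟨H - h - 1, by omega⟩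
  have hm1 : H - (h + 1) = m := by omega
  rw [hm]
  set a := π s h with ha
  have hbdd : BddAbove (Set.range fun a : A =>
      r s a h + ∑ s' : S, p s a h s' * optVal p r m (h + 1) s') :=
    (Set.finite_range _).bddAbove
  have h0 : (0:ℝ) ≤ optVal p r (m+1) h s := optVal_nonneg p r hp0 hr (m+1) h s
  have hle : r s a h + (∑ s' : S, phat s a h s' * W s') - φ s a h ≤
      optVal p r (m+1) h s := by
    have step1 : ∑ s' : S, phat s a h s' * W s' ≤
        ∑ s' : S, phat s a h s' * optVal p r (H - (h+1)) (h+1) s' :=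
      Finset.sum_le_sum fun s' _ =>
        mul_le_mul_of_nonneg_left (hW s') (hphat0 s a h s')
    have step2 : ∑ s' : S, phat s a h s' * optVal p r (H - (h+1)) (h+1) s' -
        ∑ s' : S, p s a h s' * optVal p r (H - (h+1)) (h+1) s' ≤ φ s a h := by
      have := (abs_le.mp (hconc s a)).2
      rw [← Finset.sum_sub_distrib]
      simpa [sub_mul] using this
    have step3 : r s a h + ∑ s' : S, p s a h s' * optVal p r m (h + 1) s' ≤
        optVal p r (m+1) h s :=
      le_ciSup hbdd a
    rw [hm1] at step1 step2
    linarith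
  exact max_le hle h0
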